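/- Let Σ be a null hyperplane in an (n+1)-dimensional Lorentzian vector space with radical spanned by e, K a symmetric bilinear form on Σ with K(·,e) = 0, V₀ a spacelike section with eigenvalues λ₁ ≤ ... ≤ λ_{n−1} of the operator associated to K|_{V₀}. Then for every 1 ≤ k ≤ n−1, the infimum of tr_W(K) over k-dimensional spacelike subspaces W ⊆ Σ equals λ₁ + ... + λ_k, and it is attained. -/

import Mathlib

open scoped RealInnerProductSpace

/-- Bessel-type inequality: if the rows of a matrix are orthonormal,
each column has sum of squares at most 1. -/
lemma aux_bessel_17 {k m : ℕ} (a : Fin k → Fin m → ℝ)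
    (h : ∀ i i', ∑ j, a i j * a i' j = if i = i' then 1 else 0) (j : Fin m) :
    ∑ i, (a i j) ^ 2 ≤ 1 := by
  classical
  set u : Fin k → EuclideanSpace ℝ (Fin m) := fun i => WithLp.toLp 2 (fun j' => a i j') with hu
  have hortho : Orthonormal ℝ u := by
    rw [orthonormal_iff_ite]
    intro i i'
    simpa [hu, PiLp.inner_apply, RCLike.inner_apply, conj_trivial, mul_comm] using h i i'
  have hb := hortho.sum_inner_products_le (x := EuclideanSpace.single j (1 : ℝ))
    (s := Finset.univ)
  have hx : ‖(EuclideanSpace.single j (1 : ℝ) : EuclideanSpace ℝ (Fin m))‖ = 1 := by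
    rw [EuclideanSpace.norm_single]; simp
  have hinner : ∀ i, ⟪u i, (EuclideanSpace.single j (1 : ℝ) : EuclideanSpace ℝ (Fin m))⟫ = a i j := by
    intro i
    rw [real_inner_comm, EuclideanSpace.inner_single_left]
    simp [hu]
  calc ∑ i, (a i j) ^ 2
      = ∑ i, ‖⟪u i, (EuclideanSpace.single j (1 : ℝ) : EuclideanSpace ℝ (Fin m))⟫‖ ^ 2 := by
        apply Finset.sum_congr rfl
        intro i _
        rw [hinner i, Real.norm_eq_abs, sq_abs]
    _ ≤ ‖(EuclideanSpace.single j (1 : ℝ) : EuclideanSpace ℝ (Fin m))‖ ^ 2 := hb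
    _ = 1 := by rw [hx]; norm_num

/-- The extremal weighted-sum inequality: if weights `μ j ∈ [0,1]` sum to `k` and
`lam` is monotone, then the weighted sum is at least the sum of the `k` smallest values. -/
lemma aux_ineq_17 {m k : ℕ} (hk : 1 ≤ k) (hkm : k ≤ m)
    (lam : Fin m → ℝ) (hmono : Monotone lam)
    (μ : Fin m → ℝ) (h0 : ∀ j, 0 ≤ μ j) (h1 : ∀ j, μ j ≤ 1)
    (hs : ∑ j, μ j = (k : ℝ)) :
    ∑ i : Fin k, lam (Fin.castLE hkm i) ≤ ∑ j, lam j * μ j := by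
  classical
  set cst : ℝ := lam (Fin.castLE hkm ⟨k - 1, by omega⟩) with hcst
  set F : Finset (Fin m) := (Finset.univ : Finset (Fin k)).map (Fin.castLEEmb hkm) with hF
  have hmemF : ∀ j : Fin m, j ∈ F ↔ (j : ℕ) < k := by
    intro j
    simp only [hF, Finset.mem_map, Finset.mem_univ, true_and]
    constructor
    · rintro ⟨i, rfl⟩; exact i.isLt
    · intro hj; exact ⟨⟨(j : ℕ), hj⟩, by ext; simp⟩
  have hcardF : F.card = k := by simp [hF]
  have hsumF : ∑ j ∈ F, lam j = ∑ i : Fin k, lam (Fin.castLE hkm i) := by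
    rw [hF, Finset.sum_map]; rfl
  have key : ∑ j ∈ F, (lam j - cst) ≤ ∑ j, (lam j - cst) * μ j := by
    have hrw : ∑ j ∈ F, (lam j - cst)
        = ∑ j, (if j ∈ F then lam j - cst else 0) := by
      rw [Finset.sum_ite_mem, Finset.univ_inter]
    rw [hrw]
    apply Finset.sum_le_sum
    intro j _
    by_cases hjF : j ∈ F
    · rw [if_pos hjF]
      have hjk : (j : ℕ) < k := (hmemF j).1 hjF
      have hle : lam j ≤ cst := by
        apply hmono
        simp only [Fin.le_def, Fin.coe_castLE]
        omega
      nlinarith [h1 j, h0 j]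
    · rw [if_neg hjF]
      have hjk : k ≤ (j : ℕ) := by
        have := (hmemF j).not.1 hjF
        omega
      have hle : cst ≤ lam j := by
        apply hmono
        simp only [Fin.le_def, Fin.coe_castLE]
        omega
      exact mul_nonneg (by linarith) (h0 j)
  have e1 : ∑ j, lam j * μ j = ∑ j, (lam j - cst) * μ j + cst * (k : ℝ) := by
    rw [← hs, Finset.mul_sum, ← Finset.sum_add_distrib]
    apply Finset.sum_congr rfl
    intro j _
    ring
  have e2 : ∑ j ∈ F, (lam j - cst) = ∑ j ∈ F, lam j - cst * (k : ℝ) := by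
    rw [Finset.sum_sub_distrib, Finset.sum_const, hcardF]
    ring_nf
  rw [e1, ← hsumF]
  linarith [key, e2.le]

/-- Let `S` be a null hyperplane (of an `(n+1)`-dimensional Lorentzian space) with
radical spanned by `e`, `K` a symmetric bilinear form on `S` with `K(·,e) = 0`, and
`V₀` a spacelike section with eigenvalues `λ₁ ≤ ... ≤ λ_{n−1}` of the operator
associated to `K|_{V₀}` (w.r.t. a `B`-orthonormal eigenbasis `g`). Then for each
`1 ≤ k ≤ n−1`, the least value of `tr_W(K)` over `k`-dimensional spacelike subspaces
`W ⊆ S` (described by `B`-orthonormal families of `k` vectors in `S`) is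
`λ₁ + ... + λ_k`, and it is attained. -/
theorem stmt_17
    {V : Type*} [AddCommGroup V] [Module ℝ V]
    {n k : ℕ} (hk : 1 ≤ k) (hkn : k ≤ n - 1)
    (B : V →ₗ[ℝ] V →ₗ[ℝ] ℝ) (hBsymm : ∀ x y, B x y = B y x)
    (hdimV : Module.finrank ℝ V = n + 1)
    (S : Submodule ℝ V) (hdimS : Module.finrank ℝ S = n)
    (e : V) (heS : e ∈ S) (he0 : e ≠ 0) (hrad : ∀ y ∈ S, B e y = 0)
    (K : V →ₗ[ℝ] V →ₗ[ℝ] ℝ)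
    (hKsymm : ∀ x ∈ S, ∀ y ∈ S, K x y = K y x)
    (hKe : ∀ x ∈ S, K x e = 0 ∧ K e x = 0)
    (V₀ : Submodule ℝ V) (hV₀ : V₀ ≤ S) (heV₀ : e ∉ V₀)
    (hsec : ∀ w ∈ S, ∃ v ∈ V₀, ∃ c : ℝ, w = v + c • e)
    (g : Fin (n - 1) → V) (hgV : ∀ i, g i ∈ V₀)
    (hgon : ∀ i j, B (g i) (g j) = if i = j then 1 else 0)
    (hgspan : Submodule.span ℝ (Set.range g) = V₀)
    (lam : Fin (n - 1) → ℝ) (hmono : Monotone lam)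
    (heig : ∀ i, ∀ x ∈ V₀, K (g i) x = lam i * B (g i) x) :
    IsLeast
      {t : ℝ | ∃ f : Fin k → V, (∀ i, f i ∈ S) ∧
        (∀ i j, B (f i) (f j) = if i = j then 1 else 0) ∧
        t = ∑ i : Fin k, K (f i) (f i)}
      (∑ i : Fin k, lam (Fin.castLE hkn i)) := by
  classical
  have hgS : ∀ j, g j ∈ S := fun j => hV₀ (hgV j)
  -- expansion of elements of V₀ in the basis g
  have expand : ∀ v ∈ V₀, v = ∑ j, B (g j) v • g j := by
    intro v hv
    rw [← hgspan] at hv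
    obtain ⟨c, hc⟩ := Finsupp.mem_span_range_iff_exists_finsupp.mp hv
    have hc' : (c.sum fun j r => r • g j) = ∑ j, c j • g j := by
      rw [Finsupp.sum_fintype]; intro j; simp
    rw [hc'] at hc
    have hco : ∀ j, B (g j) v = c j := by
      intro j
      rw [← hc]
      simp [map_sum, map_smul, hgon, smul_eq_mul, mul_ite, eq_comm]
    have hsc : ∑ j, c j • g j = ∑ j, B (g j) v • g j :=
      Finset.sum_congr rfl fun j _ => by rw [hco j]
    conv_lhs => rw [← hc]
    exact hsc
  have Bexp : ∀ v ∈ V₀, ∀ w, B v w = ∑ j, B (g j) v * B (g j) w := by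
    intro v hv w
    conv_lhs => rw [expand v hv]
    simp [map_sum, LinearMap.sum_apply, map_smul, LinearMap.smul_apply, smul_eq_mul]
  have Kexp : ∀ v ∈ V₀, ∀ w ∈ V₀, K v w = ∑ j, lam j * (B (g j) v * B (g j) w) := by
    intro v hv w hw
    conv_lhs => rw [expand v hv]
    rw [map_sum, LinearMap.sum_apply]
    apply Finset.sum_congr rfl
    intro j _
    rw [map_smul, LinearMap.smul_apply, smul_eq_mul, heig j w hw]
    ring
  constructor
  · -- attained: f = g ∘ castLE
    refine ⟨fun i => g (Fin.castLE hkn i), fun i => hgS _, ?_, ?_⟩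
    · intro i j
      rw [hgon]
      simp [Fin.castLE_inj]
    · apply Finset.sum_congr rfl
      intro i _
      rw [heig _ _ (hgV _), hgon]
      simp
  · -- lower bound
    rintro t ⟨f, hfS, hfon, rfl⟩
    choose v hvV₀ c hfc using fun i => hsec (f i) (hfS i)
    have hvS : ∀ i, v i ∈ S := fun i => hV₀ (hvV₀ i)
    -- row orthonormality of the coefficient matrix
    have h1 : ∀ i i', ∑ j, B (g j) (v i) * B (g j) (v i') = if i = i' then 1 else 0 := by
      intro i i'
      have hB : B (f i) (f i') = B (v i) (v i') := by
        rw [hfc i, hfc i']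
        have ha : B e (v i') = 0 := hrad _ (hvS i')
        have hb : B (v i) e = 0 := by rw [hBsymm]; exact hrad _ (hvS i)
        have hcc : B e e = 0 := hrad _ heS
        simp [map_add, map_smul, LinearMap.add_apply, LinearMap.smul_apply,
          ha, hb, hcc, smul_eq_mul]
      rw [← hfon i i', hB, Bexp _ (hvV₀ i)]
    have h2 : ∀ i, K (f i) (f i) = ∑ j, lam j * (B (g j) (v i)) ^ 2 := by
      intro i
      have hK : K (f i) (f i) = K (v i) (v i) := by
        rw [hfc i]
        have ha : K e (v i) = 0 := (hKe _ (hvS i)).2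
        have hb : K (v i) e = 0 := (hKe _ (hvS i)).1
        have hcc : K e e = 0 := (hKe _ heS).1
        simp [map_add, map_smul, LinearMap.add_apply, LinearMap.smul_apply,
          ha, hb, hcc, smul_eq_mul]
      rw [hK, Kexp _ (hvV₀ i) _ (hvV₀ i)]
      apply Finset.sum_congr rfl
      intro j _
      ring
    -- column sums of squares
    have hmu_nonneg : ∀ j : Fin (n-1), (0:ℝ) ≤ ∑ i, (B (g j) (v i)) ^ 2 := fun j =>
      Finset.sum_nonneg fun i _ => sq_nonneg _
    have hmu_le : ∀ j : Fin (n-1), ∑ i, (B (g j) (v i)) ^ 2 ≤ 1 := by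
      intro j
      exact aux_bessel_17 (fun i j => B (g j) (v i)) h1 j
    have hsum_mu : ∑ j : Fin (n-1), ∑ i, (B (g j) (v i)) ^ 2 = (k : ℝ) := by
      rw [Finset.sum_comm]
      have hone : ∀ i : Fin k, ∑ j, (B (g j) (v i)) ^ 2 = 1 := by
        intro i
        have := h1 i i
        rw [if_pos rfl] at this
        rw [← this]
        apply Finset.sum_congr rfl
        intro j _
        ring
      rw [Finset.sum_congr rfl fun i _ => hone i]
      simp
    have htr : ∑ i, K (f i) (f i) = ∑ j : Fin (n-1), lam j * ∑ i, (B (g j) (v i)) ^ 2 := by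
      rw [Finset.sum_congr rfl fun i _ => h2 i, Finset.sum_comm]
      apply Finset.sum_congr rfl
      intro j _
      rw [Finset.mul_sum]
    rw [htr]
    exact aux_ineq_17 hk hkn lam hmono _ hmu_nonneg hmu_le hsum_mu
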